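/- arXiv:1203.5168 — 8 statements merged into one kernel-verified Lean document; each statement's English description precedes it below -/
import Mathlib

section
/- Let (λ, μ, M, m) be an exact context with λ: R → S, μ: R → T. Then the pair (λ, μ) is exact (i.e. (S ⊗_R T, 1⊗1) is an exact complement) if and only if the S-T-bimodule map γ: S ⊗_R T → M defined by s ⊗ t ↦ s·m·t is an isomorphism. -/
open MulOpposite
open scoped TensorProduct

universe u

/-- The tensor product over `R` of a right `R`-module `A` (with right action `ract`)
and a left `R`-module `B` (with left action `lact`), realized as the quotient of
`A ⊗[ℤ] B` by the relations `(a·r) ⊗ b = a ⊗ (r·b)`. -/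
noncomputable abbrev tensorOver (R : Type u) [Ring R] {A B : Type u}
    [AddCommGroup A] [AddCommGroup B]
    (ract : A → R → A) (lact : R → B → B) : Type u :=
  (TensorProduct ℤ A B) ⧸
    AddSubgroup.closure {x : TensorProduct ℤ A B |
      ∃ (a : A) (r : R) (b : B), x = (ract a r) ⊗ₜ[ℤ] b - a ⊗ₜ[ℤ] (lact r b)}

/-- The class of the elementary tensor `a ⊗ b` in `tensorOver R ract lact`. -/
noncomputable def tensorOver.mk (R : Type u) [Ring R] {A B : Type u}
    [AddCommGroup A] [AddCommGroup B]
    (ract : A → R → A) (lact : R → B → B) (a : A) (b : B) : tensorOver R ract lact :=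
  QuotientAddGroup.mk (a ⊗ₜ[ℤ] b)

section
variable {R S T : Type u} [Ring R] [Ring S] [Ring T]

/-- `S ⊗_R T`, where `S` is a right `R`-module via `λ` and `T` a left `R`-module via `μ`. -/
noncomputable abbrev TensST (lam : R →+* S) (mu : R →+* T) : Type u :=
  tensorOver R (fun (s : S) (r : R) => s * lam r) (fun (r : R) (t : T) => mu r * t)

/-- The elementary tensor `s ⊗ t` in `S ⊗_R T`. -/
noncomputable def eST (lam : R →+* S) (mu : R →+* T) (s : S) (t : T) : TensST lam mu :=
  tensorOver.mk R _ _ s t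

/-- `(λ, μ, M, m)` is an exact context: the sequence
`0 → R → S ⊕ T → M → 0` with maps `r ↦ (λ r, μ r)` and `(s,t) ↦ s•m − m•t` is exact. -/
def IsExactContext {M : Type u} [AddCommGroup M] [Module S M] [Module Tᵐᵒᵖ M]
    (lam : R →+* S) (mu : R →+* T) (m : M) : Prop :=
  Function.Injective (fun r : R => (lam r, mu r)) ∧
  (∀ (s : S) (t : T), s • m = op t • m ↔ ∃ r : R, lam r = s ∧ mu r = t) ∧
  (∀ x : M, ∃ (s : S) (t : T), x = s • m - op t • m)

/-- `(λ, μ)` is an exact pair: `(λ, μ, S ⊗_R T, 1 ⊗ 1)` is an exact context. -/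
noncomputable def IsExactPair (lam : R →+* S) (mu : R →+* T) : Prop :=
  Function.Injective (fun r : R => (lam r, mu r)) ∧
  (∀ (s : S) (t : T), eST lam mu s 1 = eST lam mu 1 t ↔ ∃ r : R, lam r = s ∧ mu r = t) ∧
  (∀ x : TensST lam mu, ∃ (s : S) (t : T), x = eST lam mu s 1 - eST lam mu 1 t)


lemma eST_lam_eq_mu {R S T : Type u} [Ring R] [Ring S] [Ring T]
    (lam : R →+* S) (mu : R →+* T) (r : R) :
    eST lam mu (lam r) 1 = eST lam mu 1 (mu r) := by
  unfold eST tensorOver.mk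
  rw [QuotientAddGroup.eq]
  have h : ((1 : S) * lam r) ⊗ₜ[ℤ] (1 : T) - (1 : S) ⊗ₜ[ℤ] (mu r * 1) ∈
      AddSubgroup.closure {x : TensorProduct ℤ S T |
        ∃ (a : S) (r' : R) (b : T), x = (a * lam r') ⊗ₜ[ℤ] b - a ⊗ₜ[ℤ] (mu r' * b)} :=
    AddSubgroup.subset_closure ⟨1, r, 1, rfl⟩
  simpa [sub_eq_neg_add] using (neg_mem h)

/-- Given an exact context `(λ, μ, M, m)`, the pair `(λ, μ)` is exact
iff the `(S,T)`-bimodule map `γ : S ⊗_R T → M`, `s ⊗ t ↦ s·m·t`, is an isomorphism. -/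
theorem stmt1 {M : Type u} [AddCommGroup M] [Module S M] [Module Tᵐᵒᵖ M]
    [SMulCommClass S Tᵐᵒᵖ M]
    (lam : R →+* S) (mu : R →+* T) (m : M)
    (hEC : IsExactContext lam mu m)
    (γ : TensST lam mu →+ M)
    (hγ : ∀ (s : S) (t : T), γ (eST lam mu s t) = s • (op t • m)) :
    IsExactPair lam mu ↔ Function.Bijective γ := by
  obtain ⟨hinj, hmid, hsurj⟩ := hEC
  constructor
  · rintro ⟨pinj, pmid, psurj⟩
    constructor
    · rw [injective_iff_map_eq_zero]
      intro x hx
      obtain ⟨s, t, rfl⟩ := psurj x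
      rw [map_sub, hγ, hγ] at hx
      simp only [op_one, one_smul] at hx
      obtain ⟨r, hr1, hr2⟩ := (hmid s t).1 (sub_eq_zero.mp hx)
      rw [← hr1, ← hr2, eST_lam_eq_mu, sub_self]
    · intro x
      obtain ⟨s, t, hx⟩ := hsurj x
      refine ⟨eST lam mu s 1 - eST lam mu 1 t, ?_⟩
      rw [map_sub, hγ, hγ]
      simp [hx]
  · rintro ⟨ginj, gsurj⟩
    refine ⟨hinj, ?_, ?_⟩
    · intro s t
      constructor
      · intro h
        apply (hmid s t).1
        have h2 := congrArg γ h
        rw [hγ, hγ] at h2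
        simpa using h2
      · rintro ⟨r, rfl, rfl⟩
        exact eST_lam_eq_mu lam mu r
    · intro x
      obtain ⟨s, t, hx⟩ := hsurj (γ x)
      refine ⟨s, t, ginj ?_⟩
      rw [map_sub, hγ, hγ]
      simpa using hx

end
end

section
/- Let (λ, μ, M, m) be an exact context. The canonical map γ: S ⊗_R T → M, s ⊗ t ↦ smt, is an isomorphism if and only if Coker(λ) ⊗_R Coker(μ) = 0. -/
open MulOpposite
open scoped TensorProduct

universe u

section generic
variable {R : Type u} [Ring R] {A B : Type u} [AddCommGroup A] [AddCommGroup B]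
variable (ract : A → R → A) (lact : R → B → B)

lemma tensorOver.mk_add_left (a a' : A) (b : B) :
    tensorOver.mk R ract lact (a + a') b
      = tensorOver.mk R ract lact a b + tensorOver.mk R ract lact a' b := by
  simp only [tensorOver.mk, TensorProduct.add_tmul]
  rfl

lemma tensorOver.mk_add_right (a : A) (b b' : B) :
    tensorOver.mk R ract lact a (b + b')
      = tensorOver.mk R ract lact a b + tensorOver.mk R ract lact a b' := by
  simp only [tensorOver.mk, TensorProduct.tmul_add]
  rfl

lemma tensorOver.mk_neg_left (a : A) (b : B) :
    tensorOver.mk R ract lact (-a) b = -tensorOver.mk R ract lact a b := by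
  simp only [tensorOver.mk, TensorProduct.neg_tmul]
  rfl

lemma tensorOver.mk_neg_right (a : A) (b : B) :
    tensorOver.mk R ract lact a (-b) = -tensorOver.mk R ract lact a b := by
  simp only [tensorOver.mk, TensorProduct.tmul_neg]
  rfl

lemma tensorOver.mk_zero_left (b : B) :
    tensorOver.mk R ract lact (0 : A) b = 0 := by
  simp only [tensorOver.mk, TensorProduct.zero_tmul]
  rfl

lemma tensorOver.mk_zero_right (a : A) :
    tensorOver.mk R ract lact a (0 : B) = 0 := by
  simp only [tensorOver.mk, TensorProduct.tmul_zero]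
  rfl

lemma tensorOver.mk_rel (a : A) (r : R) (b : B) :
    tensorOver.mk R ract lact (ract a r) b = tensorOver.mk R ract lact a (lact r b) := by
  simp only [tensorOver.mk]
  rw [QuotientAddGroup.eq]
  have h : ((ract a r) ⊗ₜ[ℤ] b - a ⊗ₜ[ℤ] (lact r b)) ∈
      AddSubgroup.closure {x : TensorProduct ℤ A B |
        ∃ (a : A) (r : R) (b : B), x = (ract a r) ⊗ₜ[ℤ] b - a ⊗ₜ[ℤ] (lact r b)} :=
    AddSubgroup.subset_closure ⟨a, r, b, rfl⟩
  have := AddSubgroup.neg_mem _ h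
  simpa [neg_sub, sub_eq_neg_add] using this

/-- Every element of `tensorOver` lying in a subgroup containing all elementary tensors. -/
lemma tensorOver.mem_of_forall_mk {H : AddSubgroup (tensorOver R ract lact)}
    (h : ∀ a b, tensorOver.mk R ract lact a b ∈ H) (x : tensorOver R ract lact) : x ∈ H := by
  obtain ⟨z, rfl⟩ := QuotientAddGroup.mk_surjective x
  induction z using TensorProduct.induction_on with
  | zero => simpa using H.zero_mem
  | tmul a b => exact h a b
  | add u v hu hv =>
      rw [show (QuotientAddGroup.mk (u + v) : tensorOver R ract lact)
        = QuotientAddGroup.mk u + QuotientAddGroup.mk v from rfl]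
      exact H.add_mem hu hv

lemma tensorOver.eq_zero_of_forall_mk
    (h : ∀ a b, tensorOver.mk R ract lact a b = (0 : tensorOver R ract lact))
    (x : tensorOver R ract lact) : x = 0 := by
  have := tensorOver.mem_of_forall_mk ract lact (H := ⊥) (fun a b => by simp [h a b]) x
  simpa using this

end generic

section
variable {R S T : Type u} [Ring R] [Ring S] [Ring T]

namespace Stmt2Aux

variable (lam : R →+* S) (mu : R →+* T)

lemma eST_add_left (s s' : S) (t : T) :
    eST lam mu (s + s') t = eST lam mu s t + eST lam mu s' t :=
  tensorOver.mk_add_left _ _ s s' t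

lemma eST_add_right (s : S) (t t' : T) :
    eST lam mu s (t + t') = eST lam mu s t + eST lam mu s t' :=
  tensorOver.mk_add_right _ _ s t t'

lemma eST_neg_left (s : S) (t : T) : eST lam mu (-s) t = -eST lam mu s t :=
  tensorOver.mk_neg_left _ _ s t

lemma eST_neg_right (s : S) (t : T) : eST lam mu s (-t) = -eST lam mu s t :=
  tensorOver.mk_neg_right _ _ s t

lemma eST_zero_left (t : T) : eST lam mu (0 : S) t = 0 :=
  tensorOver.mk_zero_left _ _ t

lemma eST_zero_right (s : S) : eST lam mu s (0 : T) = 0 :=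
  tensorOver.mk_zero_right _ _ s

lemma eST_rel (s : S) (r : R) (t : T) :
    eST lam mu (s * lam r) t = eST lam mu s (mu r * t) :=
  tensorOver.mk_rel _ _ s r t

lemma eST_one_rel (r : R) : eST lam mu (lam r) 1 = eST lam mu 1 (mu r) := by
  have h := eST_rel lam mu 1 r 1
  simpa using h

/-- The additive subgroup of `S ⊗_R T` of elements `s ⊗ 1 - 1 ⊗ t`. -/
noncomputable def G : AddSubgroup (TensST lam mu) where
  carrier := {x | ∃ s t, x = eST lam mu s 1 - eST lam mu 1 t}
  zero_mem' := ⟨0, 0, by rw [eST_zero_left, eST_zero_right, sub_zero]⟩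
  add_mem' := by
    rintro a b ⟨s, t, rfl⟩ ⟨s', t', rfl⟩
    refine ⟨s + s', t + t', ?_⟩
    rw [eST_add_left, eST_add_right]
    abel
  neg_mem' := by
    rintro a ⟨s, t, rfl⟩
    refine ⟨-s, -t, ?_⟩
    rw [eST_neg_left, eST_neg_right]
    abel

lemma mem_G (s : S) (t : T) : eST lam mu s 1 - eST lam mu 1 t ∈ G lam mu := ⟨s, t, rfl⟩

lemma mem_G_left (s : S) : eST lam mu s 1 ∈ G lam mu :=
  ⟨s, 0, by rw [eST_zero_right, sub_zero]⟩

lemma mem_G_right (t : T) : eST lam mu 1 t ∈ G lam mu :=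
  ⟨0, -t, by rw [eST_zero_left, eST_neg_right, zero_sub, neg_neg]⟩

variable (ract : (S ⧸ lam.toAddMonoidHom.range) → R → (S ⧸ lam.toAddMonoidHom.range))
variable (lact : R → (T ⧸ mu.toAddMonoidHom.range) → (T ⧸ mu.toAddMonoidHom.range))

/-- The map `S ⊗ T → Coker(λ) ⊗ Coker(μ)` before quotienting the source. -/
noncomputable def piPre : TensorProduct ℤ S T →+ tensorOver R ract lact :=
  (QuotientAddGroup.mk' _).comp
    ((TensorProduct.map (QuotientAddGroup.mk' lam.toAddMonoidHom.range).toIntLinearMap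
      (QuotientAddGroup.mk' mu.toAddMonoidHom.range).toIntLinearMap).toAddMonoidHom)

lemma piPre_tmul (s : S) (t : T) :
    piPre lam mu ract lact (s ⊗ₜ[ℤ] t)
      = tensorOver.mk R ract lact (QuotientAddGroup.mk s) (QuotientAddGroup.mk t) := by
  simp only [piPre, AddMonoidHom.comp_apply, LinearMap.toAddMonoidHom_coe,
    TensorProduct.map_tmul]
  rfl

variable (hract : ∀ (s : S) (r : R),
      ract (QuotientAddGroup.mk s) r = QuotientAddGroup.mk (s * lam r))
variable (hlact : ∀ (r : R) (t : T),
      lact r (QuotientAddGroup.mk t) = QuotientAddGroup.mk (mu r * t))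

/-- The induced map `S ⊗_R T → Coker(λ) ⊗_R Coker(μ)`. -/
noncomputable def piMap : TensST lam mu →+ tensorOver R ract lact :=
  QuotientAddGroup.lift _ (piPre lam mu ract lact) (by
    rw [AddSubgroup.closure_le]
    rintro x ⟨a, r, b, rfl⟩
    rw [SetLike.mem_coe, AddMonoidHom.mem_ker, map_sub, piPre_tmul, piPre_tmul,
      ← hract, ← hlact, tensorOver.mk_rel, sub_self])

lemma piMap_mk (s : S) (t : T) :
    piMap lam mu ract lact hract hlact (eST lam mu s t)
      = tensorOver.mk R ract lact (QuotientAddGroup.mk s) (QuotientAddGroup.mk t) := by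
  rw [show eST lam mu s t = QuotientAddGroup.mk (s ⊗ₜ[ℤ] t) from rfl]
  rw [show piMap lam mu ract lact hract hlact (QuotientAddGroup.mk (s ⊗ₜ[ℤ] t))
    = piPre lam mu ract lact (s ⊗ₜ[ℤ] t) from QuotientAddGroup.lift_mk _ _ _]
  exact piPre_tmul lam mu ract lact s t

lemma piMap_left (s : S) :
    piMap lam mu ract lact hract hlact (eST lam mu s 1) = 0 := by
  rw [piMap_mk]
  have h1 : (QuotientAddGroup.mk (1 : T) : T ⧸ mu.toAddMonoidHom.range) = 0 := by
    rw [QuotientAddGroup.eq_zero_iff]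
    exact ⟨1, by simpa using mu.map_one⟩
  rw [h1, tensorOver.mk_zero_right]

lemma piMap_right (t : T) :
    piMap lam mu ract lact hract hlact (eST lam mu 1 t) = 0 := by
  rw [piMap_mk]
  have h1 : (QuotientAddGroup.mk (1 : S) : S ⧸ lam.toAddMonoidHom.range) = 0 := by
    rw [QuotientAddGroup.eq_zero_iff]
    exact ⟨1, by simpa using lam.map_one⟩
  rw [h1, tensorOver.mk_zero_left]

/-- First step of `β`: the biadditive map `S → T → (S ⊗_R T)/G`. -/
noncomputable def bAux : S →+ T →+ (TensST lam mu ⧸ G lam mu) where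
  toFun s :=
    { toFun := fun t => QuotientAddGroup.mk (eST lam mu s t)
      map_zero' := by
        show QuotientAddGroup.mk (eST lam mu s 0) = 0
        rw [eST_zero_right]; rfl
      map_add' := fun t t' => by
        show QuotientAddGroup.mk (eST lam mu s (t + t')) = _
        rw [eST_add_right]; rfl }
  map_zero' := by
    ext t
    show QuotientAddGroup.mk (eST lam mu 0 t) = 0
    rw [eST_zero_left]; rfl
  map_add' := fun s s' => by
    ext t
    show QuotientAddGroup.mk (eST lam mu (s + s') t) = _
    rw [eST_add_left]; rfl

lemma eST_in_G_of_mu (s : S) (r : R) : eST lam mu s (mu r) ∈ G lam mu := by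
  have h : eST lam mu s (mu r) = eST lam mu (s * lam r) 1 := by
    have := eST_rel lam mu s r 1
    rw [mul_one] at this
    exact this.symm
  rw [h]
  exact mem_G_left lam mu _

lemma eST_in_G_of_lam (r : R) (t : T) : eST lam mu (lam r) t ∈ G lam mu := by
  have h : eST lam mu (lam r) t = eST lam mu 1 (mu r * t) := by
    have := eST_rel lam mu 1 r t
    rw [one_mul] at this
    exact this
  rw [h]
  exact mem_G_right lam mu _

/-- Second step: descend to `T/Im(μ)` in the second variable. -/
noncomputable def bAux2 : S →+ (T ⧸ mu.toAddMonoidHom.range) →+ (TensST lam mu ⧸ G lam mu) where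
  toFun s := QuotientAddGroup.lift _ (bAux lam mu s) (by
    rintro t ⟨r, rfl⟩
    rw [AddMonoidHom.mem_ker]
    show QuotientAddGroup.mk (eST lam mu s (mu r)) = 0
    rw [QuotientAddGroup.eq_zero_iff]
    exact eST_in_G_of_mu lam mu s r)
  map_zero' := by
    refine DFunLike.ext _ _ fun x => ?_
    refine QuotientAddGroup.induction_on x fun t => ?_
    show QuotientAddGroup.mk (eST lam mu 0 t) = 0
    rw [eST_zero_left]; rfl
  map_add' := fun s s' => by
    refine DFunLike.ext _ _ fun x => ?_
    refine QuotientAddGroup.induction_on x fun t => ?_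
    show ((QuotientAddGroup.mk (eST lam mu (s + s') t) : TensST lam mu ⧸ G lam mu))
      = QuotientAddGroup.mk (eST lam mu s t) + QuotientAddGroup.mk (eST lam mu s' t)
    rw [eST_add_left]; rfl

lemma bAux2_mk (s : S) (t : T) :
    bAux2 lam mu s (QuotientAddGroup.mk t) = QuotientAddGroup.mk (eST lam mu s t) :=
  rfl

/-- Third step: descend to `S/Im(λ)` in the first variable. -/
noncomputable def bAux3 :
    (S ⧸ lam.toAddMonoidHom.range) →+
      ((T ⧸ mu.toAddMonoidHom.range) →+ (TensST lam mu ⧸ G lam mu)) :=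
  QuotientAddGroup.lift _ (bAux2 lam mu) (by
    rintro s ⟨r, rfl⟩
    rw [AddMonoidHom.mem_ker]
    ext t
    show QuotientAddGroup.mk (eST lam mu (lam r) t) = 0
    rw [QuotientAddGroup.eq_zero_iff]
    exact eST_in_G_of_lam lam mu r t)

lemma bAux3_mk (s : S) (t : T) :
    bAux3 lam mu (QuotientAddGroup.mk s) (QuotientAddGroup.mk t)
      = QuotientAddGroup.mk (eST lam mu s t) := by
  rfl

/-- Fourth step: to the `ℤ`-tensor product. -/
noncomputable def blin :
    TensorProduct ℤ (S ⧸ lam.toAddMonoidHom.range) (T ⧸ mu.toAddMonoidHom.range) →+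
      (TensST lam mu ⧸ G lam mu) :=
  TensorProduct.liftAddHom (bAux3 lam mu) (fun z a b => by
    rw [map_zsmul, map_zsmul]; rfl)

/-- The map `β : Coker(λ) ⊗_R Coker(μ) → (S ⊗_R T)/G`. -/
noncomputable def betaMap : tensorOver R ract lact →+ (TensST lam mu ⧸ G lam mu) :=
  QuotientAddGroup.lift _ (blin lam mu) (by
    rw [AddSubgroup.closure_le]
    rintro x ⟨a, r, b, rfl⟩
    obtain ⟨s, rfl⟩ := QuotientAddGroup.mk_surjective a
    obtain ⟨t, rfl⟩ := QuotientAddGroup.mk_surjective b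
    rw [SetLike.mem_coe, AddMonoidHom.mem_ker, map_sub, hract, hlact]
    have h1 : blin lam mu ((QuotientAddGroup.mk (s * lam r) : S ⧸ lam.toAddMonoidHom.range)
        ⊗ₜ[ℤ] (QuotientAddGroup.mk t : T ⧸ mu.toAddMonoidHom.range))
        = QuotientAddGroup.mk (eST lam mu (s * lam r) t) := rfl
    have h2 : blin lam mu ((QuotientAddGroup.mk s : S ⧸ lam.toAddMonoidHom.range)
        ⊗ₜ[ℤ] (QuotientAddGroup.mk (mu r * t) : T ⧸ mu.toAddMonoidHom.range))
        = QuotientAddGroup.mk (eST lam mu s (mu r * t)) := rfl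
    rw [h1, h2, eST_rel, sub_self])

lemma betaMap_mk (s : S) (t : T) :
    betaMap lam mu ract lact hract hlact
        (tensorOver.mk R ract lact (QuotientAddGroup.mk s) (QuotientAddGroup.mk t))
      = QuotientAddGroup.mk (eST lam mu s t) := by
  rw [show tensorOver.mk R ract lact (QuotientAddGroup.mk s) (QuotientAddGroup.mk t)
    = QuotientAddGroup.mk ((QuotientAddGroup.mk s : S ⧸ lam.toAddMonoidHom.range)
        ⊗ₜ[ℤ] (QuotientAddGroup.mk t : T ⧸ mu.toAddMonoidHom.range)) from rfl]
  rw [show betaMap lam mu ract lact hract hlact (QuotientAddGroup.mk _)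
    = blin lam mu ((QuotientAddGroup.mk s : S ⧸ lam.toAddMonoidHom.range)
        ⊗ₜ[ℤ] (QuotientAddGroup.mk t : T ⧸ mu.toAddMonoidHom.range))
    from QuotientAddGroup.lift_mk _ _ _]
  exact bAux3_mk lam mu s t

end Stmt2Aux

open Stmt2Aux in
/-- For an exact context `(λ, μ, M, m)`, the canonical map
`γ : S ⊗_R T → M`, `s ⊗ t ↦ s·m·t`, is an isomorphism iff
`Coker(λ) ⊗_R Coker(μ) = 0`.  Here `Coker(λ) = S/Im(λ)` carries the induced right
`R`-action `ract` and `Coker(μ) = T/Im(μ)` the induced left `R`-action `lact`. -/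
theorem stmt2 {M : Type u} [AddCommGroup M] [Module S M] [Module Tᵐᵒᵖ M]
    [SMulCommClass S Tᵐᵒᵖ M]
    (lam : R →+* S) (mu : R →+* T) (m : M)
    (hEC : IsExactContext lam mu m)
    (γ : TensST lam mu →+ M)
    (hγ : ∀ (s : S) (t : T), γ (eST lam mu s t) = s • (op t • m))
    (ract : (S ⧸ lam.toAddMonoidHom.range) → R → (S ⧸ lam.toAddMonoidHom.range))
    (hract : ∀ (s : S) (r : R),
      ract (QuotientAddGroup.mk s) r = QuotientAddGroup.mk (s * lam r))
    (lact : R → (T ⧸ mu.toAddMonoidHom.range) → (T ⧸ mu.toAddMonoidHom.range))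
    (hlact : ∀ (r : R) (t : T),
      lact r (QuotientAddGroup.mk t) = QuotientAddGroup.mk (mu r * t)) :
    Function.Bijective γ ↔ Subsingleton (tensorOver R ract lact) := by
  have hgdiff : ∀ (s : S) (t : T),
      γ (eST lam mu s 1 - eST lam mu 1 t) = s • m - op t • m := by
    intro s t
    rw [map_sub, hγ, hγ, op_one, one_smul, one_smul]
  have hsurj : Function.Surjective γ := by
    intro x
    obtain ⟨s, t, hx⟩ := hEC.2.2 x
    exact ⟨eST lam mu s 1 - eST lam mu 1 t, by rw [hgdiff, hx]⟩
  constructor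
  · rintro ⟨hinj, -⟩
    -- every element of S⊗T has the form s⊗1 - 1⊗t
    have hG : ∀ x : TensST lam mu, ∃ s t, x = eST lam mu s 1 - eST lam mu 1 t := by
      intro x
      obtain ⟨s, t, hx⟩ := hEC.2.2 (γ x)
      exact ⟨s, t, hinj (by rw [hgdiff, ← hx])⟩
    have hpi0 : ∀ x : TensST lam mu, piMap lam mu ract lact hract hlact x = 0 := by
      intro x
      obtain ⟨s, t, rfl⟩ := hG x
      rw [map_sub, piMap_left, piMap_right, sub_zero]
    refine ⟨fun y y' => ?_⟩
    have hzero : ∀ y : tensorOver R ract lact, y = 0 := by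
      refine tensorOver.eq_zero_of_forall_mk ract lact (fun a b => ?_)
      obtain ⟨s, rfl⟩ := QuotientAddGroup.mk_surjective a
      obtain ⟨t, rfl⟩ := QuotientAddGroup.mk_surjective b
      rw [← piMap_mk lam mu ract lact hract hlact, hpi0]
    rw [hzero y, hzero y']
  · intro hY
    refine ⟨?_, hsurj⟩
    -- every element of S⊗T has the form s⊗1 - 1⊗t (membership in G)
    have hGtop : ∀ x : TensST lam mu, x ∈ G lam mu := by
      refine tensorOver.mem_of_forall_mk _ _ (fun s t => ?_)
      have h0 : tensorOver.mk R ract lact (QuotientAddGroup.mk s) (QuotientAddGroup.mk t)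
          = (0 : tensorOver R ract lact) := Subsingleton.elim _ _
      have hb := betaMap_mk lam mu ract lact hract hlact s t
      rw [h0, map_zero] at hb
      have := (QuotientAddGroup.eq_zero_iff (eST lam mu s t)).1 hb.symm
      exact this
    rw [injective_iff_map_eq_zero]
    intro x hx
    obtain ⟨s, t, hxe⟩ := hGtop x
    rw [hxe, hgdiff, sub_eq_zero] at hx
    obtain ⟨r, hs, ht⟩ := (hEC.2.1 s t).1 hx
    rw [hxe, ← hs, ← ht, eST_one_rel, sub_self]

end
end

section
/- Let (λ, μ, M, m) be an exact context and define δ: S ⊗_R T → T ⊗_R S by s ⊗ t ↦ 1 ⊗ s' + t' ⊗ 1 where smt = s'm + mt'. Then the binary operation ∘ on T ⊗_R S defined by (t₁ ⊗ s₁) ∘ (t₂ ⊗ s₂) = t₁ · δ(s₁ ⊗ t₂) · s₂ is well-defined, associative, and makes T ⊗_R S into an associative unital ring with identity 1 ⊗ 1. -/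
set_option linter.unusedSectionVars false
set_option linter.unnecessarySeqFocus false


open MulOpposite
open scoped TensorProduct

universe u

section
variable {R S T : Type u} [Ring R] [Ring S] [Ring T]

/-- `T ⊗_R S`, where `T` is a right `R`-module via `μ` and `S` a left `R`-module via `λ`. -/
noncomputable abbrev TensTS (lam : R →+* S) (mu : R →+* T) : Type u :=
  tensorOver R (fun (t : T) (r : R) => t * mu r) (fun (r : R) (s : S) => lam r * s)

/-- The elementary tensor `t ⊗ s` in `T ⊗_R S`. -/
noncomputable def eTS (lam : R →+* S) (mu : R →+* T) (t : T) (s : S) : TensTS lam mu :=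
  QuotientAddGroup.mk (t ⊗ₜ[ℤ] s)

variable (lam : R →+* S) (mu : R →+* T)

noncomputable def auxN (lam : R →+* S) (mu : R →+* T) : AddSubgroup (TensorProduct ℤ T S) :=
  AddSubgroup.closure {x : TensorProduct ℤ T S |
    ∃ (a : T) (r : R) (b : S), x = (a * mu r) ⊗ₜ[ℤ] b - a ⊗ₜ[ℤ] (lam r * b)}

variable (lam : R →+* S) (mu : R →+* T)

lemma eTS_eq (x y : TensorProduct ℤ T S) (h : x - y ∈ auxN lam mu) :
    (QuotientAddGroup.mk x : TensTS lam mu) = QuotientAddGroup.mk y := by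
  rw [QuotientAddGroup.eq_iff_sub_mem]; exact h

lemma eTS_rel (t : T) (r : R) (s : S) :
    eTS lam mu (t * mu r) s = eTS lam mu t (lam r * s) :=
  eTS_eq lam mu _ _ (AddSubgroup.subset_closure ⟨t, r, s, rfl⟩)

noncomputable def auxLR0 (t₁ : T) (s₂ : S) : TensorProduct ℤ T S →+ TensTS lam mu :=
  (QuotientAddGroup.mk' (auxN lam mu)).comp
    (TensorProduct.map (LinearMap.mulLeft ℤ t₁) (LinearMap.mulRight ℤ s₂)).toAddMonoidHom

lemma auxLR0_tmul (t₁ : T) (s₂ : S) (t : T) (s : S) :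
    auxLR0 lam mu t₁ s₂ (t ⊗ₜ[ℤ] s) = eTS lam mu (t₁ * t) (s * s₂) := rfl

/-- `t ⊗ s ↦ (t₁ * t) ⊗ (s * s₂)` on the quotient. -/
noncomputable def auxLR (t₁ : T) (s₂ : S) : TensTS lam mu →+ TensTS lam mu :=
  QuotientAddGroup.lift _ (auxLR0 lam mu t₁ s₂)
    (by
      apply (AddSubgroup.closure_le _).mpr
      rintro x ⟨a, r, b, rfl⟩
      have : auxLR0 lam mu t₁ s₂ ((a * mu r) ⊗ₜ[ℤ] b - a ⊗ₜ[ℤ] (lam r * b)) = 0 := by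
        rw [map_sub, auxLR0_tmul, auxLR0_tmul, sub_eq_zero,
          ← mul_assoc t₁ a (mu r), mul_assoc (lam r) b s₂]
        exact eTS_rel lam mu (t₁ * a) r (b * s₂)
      exact this)

lemma auxLR_apply (t₁ : T) (s₂ : S) (t : T) (s : S) :
    auxLR lam mu t₁ s₂ (eTS lam mu t s) = eTS lam mu (t₁ * t) (s * s₂) := rfl

/-- induction principle -/
lemma indTS (P : TensTS lam mu → Prop) (h0 : P 0)
    (hp : ∀ t s, P (eTS lam mu t s))
    (hadd : ∀ a b, P a → P b → P (a + b)) : ∀ x, P x := by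
  intro x
  induction x using QuotientAddGroup.induction_on with
  | H z =>
    induction z using TensorProduct.induction_on with
    | zero => exact h0
    | tmul t s => exact hp t s
    | add a b ha hb => exact hadd _ _ ha hb

lemma auxLR_add_left (t₁ t₁' : T) (s₂ : S) (z : TensTS lam mu) :
    auxLR lam mu (t₁ + t₁') s₂ z = auxLR lam mu t₁ s₂ z + auxLR lam mu t₁' s₂ z := by
  induction z using indTS lam mu with
  | h0 => simp
  | hp t s =>
      rw [auxLR_apply, auxLR_apply, auxLR_apply, add_mul]
      show QuotientAddGroup.mk _ = QuotientAddGroup.mk _ + QuotientAddGroup.mk _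
      rw [← QuotientAddGroup.mk_add, TensorProduct.add_tmul]
  | hadd a b ha hb => simp [map_add, ha, hb]; abel

lemma auxLR_add_right (t₁ : T) (s₂ s₂' : S) (z : TensTS lam mu) :
    auxLR lam mu t₁ (s₂ + s₂') z = auxLR lam mu t₁ s₂ z + auxLR lam mu t₁ s₂' z := by
  induction z using indTS lam mu with
  | h0 => simp
  | hp t s =>
      rw [auxLR_apply, auxLR_apply, auxLR_apply, mul_add]
      show QuotientAddGroup.mk _ = QuotientAddGroup.mk _ + QuotientAddGroup.mk _
      rw [← QuotientAddGroup.mk_add, TensorProduct.tmul_add]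
  | hadd a b ha hb => simp [map_add, ha, hb]; abel


lemma eTS_add_left' (t t' : T) (s : S) :
    eTS lam mu (t + t') s = eTS lam mu t s + eTS lam mu t' s := by
  show QuotientAddGroup.mk _ = QuotientAddGroup.mk _ + QuotientAddGroup.mk _
  rw [← QuotientAddGroup.mk_add, TensorProduct.add_tmul]

lemma eTS_add_right' (t : T) (s s' : S) :
    eTS lam mu t (s + s') = eTS lam mu t s + eTS lam mu t s' := by
  show QuotientAddGroup.mk _ = QuotientAddGroup.mk _ + QuotientAddGroup.mk _
  rw [← QuotientAddGroup.mk_add, TensorProduct.tmul_add]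

lemma eTS_sub_left (t t' : T) (s : S) :
    eTS lam mu (t - t') s = eTS lam mu t s - eTS lam mu t' s := by
  show QuotientAddGroup.mk _ = QuotientAddGroup.mk _ - QuotientAddGroup.mk _
  rw [← QuotientAddGroup.mk_sub, TensorProduct.sub_tmul]

lemma eTS_sub_right (t : T) (s s' : S) :
    eTS lam mu t (s - s') = eTS lam mu t s - eTS lam mu t s' := by
  show QuotientAddGroup.mk _ = QuotientAddGroup.mk _ - QuotientAddGroup.mk _
  rw [← QuotientAddGroup.mk_sub, TensorProduct.tmul_sub]

lemma eTS_zero_left (s : S) : eTS lam mu 0 s = 0 := by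
  show QuotientAddGroup.mk _ = _
  rw [TensorProduct.zero_tmul]; rfl

lemma eTS_zero_right (t : T) : eTS lam mu t 0 = 0 := by
  show QuotientAddGroup.mk _ = _
  rw [TensorProduct.tmul_zero]; rfl

section Beta
variable {M : Type u} [AddCommGroup M] [Module S M] [Module Tᵐᵒᵖ M] [SMulCommClass S Tᵐᵒᵖ M]
variable {m : M} {lam' : R →+* S} {mu' : R →+* T}

lemma exists_decomp (hEC : IsExactContext lam' mu' m) (x : M) :
    ∃ (u : S) (v : T), x = u • m + op v • m := by
  obtain ⟨s, t, h⟩ := hEC.2.2 x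
  exact ⟨s, -t, by rw [h, op_neg, neg_smul, sub_eq_add_neg]⟩

lemma lam_smul_m (hEC : IsExactContext lam' mu' m) (r : R) :
    lam' r • m = op (mu' r) • m :=
  (hEC.2.1 (lam' r) (mu' r)).mpr ⟨r, rfl, rfl⟩

/-- β : M → T ⊗_R S -/
noncomputable def beta (hEC : IsExactContext lam' mu' m) (x : M) : TensTS lam' mu' :=
  eTS lam' mu' 1 (exists_decomp hEC x).choose +
    eTS lam' mu' (exists_decomp hEC x).choose_spec.choose 1

lemma beta_spec (hEC : IsExactContext lam' mu' m) (x : M) (u : S) (v : T)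
    (h : x = u • m + op v • m) :
    beta hEC x = eTS lam' mu' 1 u + eTS lam' mu' v 1 := by
  set u₀ := (exists_decomp hEC x).choose with hu₀
  set v₀ := (exists_decomp hEC x).choose_spec.choose with hv₀
  have h₀ : x = u₀ • m + op v₀ • m := (exists_decomp hEC x).choose_spec.choose_spec
  have key : (u - u₀) • m = op (v₀ - v) • m := by
    rw [sub_smul, op_sub, sub_smul, sub_eq_sub_iff_add_eq_add]
    exact (h.symm.trans h₀).trans (add_comm _ _)
  obtain ⟨r, hr1, hr2⟩ := (hEC.2.1 _ _).mp key
  have e1 : eTS lam' mu' 1 (lam' r) = eTS lam' mu' (mu' r) 1 := by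
    have := eTS_rel lam' mu' 1 r 1
    rw [one_mul, mul_one] at this
    exact this.symm
  rw [beta]
  have goal : eTS lam' mu' 1 u - eTS lam' mu' 1 u₀ =
      eTS lam' mu' v₀ 1 - eTS lam' mu' v 1 := by
    rw [← eTS_sub_right, ← eTS_sub_left, ← hr1, ← hr2]
    exact e1
  rw [eq_comm, ← sub_eq_zero]
  rw [show eTS lam' mu' 1 u + eTS lam' mu' v 1 - (eTS lam' mu' 1 u₀ + eTS lam' mu' v₀ 1)
    = (eTS lam' mu' 1 u - eTS lam' mu' 1 u₀) - (eTS lam' mu' v₀ 1 - eTS lam' mu' v 1) by abel]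
  rw [goal, sub_self]

lemma beta_add (hEC : IsExactContext lam' mu' m) (x y : M) :
    beta hEC (x + y) = beta hEC x + beta hEC y := by
  obtain ⟨u1, v1, h1⟩ := exists_decomp hEC x
  obtain ⟨u2, v2, h2⟩ := exists_decomp hEC y
  have h3 : x + y = (u1 + u2) • m + op (v1 + v2) • m := by
    rw [h1, h2, add_smul, op_add, add_smul]; abel
  rw [beta_spec hEC x u1 v1 h1, beta_spec hEC y u2 v2 h2, beta_spec hEC _ _ _ h3,
    eTS_add_right', eTS_add_left']
  abel


/-- core multiplication of pure tensors -/
noncomputable def core (hEC : IsExactContext lam' mu' m) (t₁ : T) (s₁ : S) (t₂ : T) (s₂ : S) :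
    TensTS lam' mu' :=
  auxLR lam' mu' t₁ s₂ (beta hEC (s₁ • (op t₂ • m)))

lemma core_spec (hEC : IsExactContext lam' mu' m) (t₁ : T) (s₁ : S) (t₂ : T) (s₂ : S)
    (u : S) (v : T) (h : s₁ • (op t₂ • m) = u • m + op v • m) :
    core hEC t₁ s₁ t₂ s₂ = eTS lam' mu' t₁ (u * s₂) + eTS lam' mu' (t₁ * v) s₂ := by
  rw [core, beta_spec hEC _ u v h, map_add, auxLR_apply, auxLR_apply, mul_one, one_mul]

lemma core_add1 (hEC : IsExactContext lam' mu' m) (t₁ t₁' : T) (s₁ : S) (t₂ : T) (s₂ : S) :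
    core hEC (t₁ + t₁') s₁ t₂ s₂ = core hEC t₁ s₁ t₂ s₂ + core hEC t₁' s₁ t₂ s₂ :=
  auxLR_add_left lam' mu' t₁ t₁' s₂ _

lemma core_add4 (hEC : IsExactContext lam' mu' m) (t₁ : T) (s₁ : S) (t₂ : T) (s₂ s₂' : S) :
    core hEC t₁ s₁ t₂ (s₂ + s₂') = core hEC t₁ s₁ t₂ s₂ + core hEC t₁ s₁ t₂ s₂' :=
  auxLR_add_right lam' mu' t₁ s₂ s₂' _

lemma core_add2 (hEC : IsExactContext lam' mu' m) (t₁ : T) (s₁ s₁' : S) (t₂ : T) (s₂ : S) :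
    core hEC t₁ (s₁ + s₁') t₂ s₂ = core hEC t₁ s₁ t₂ s₂ + core hEC t₁ s₁' t₂ s₂ := by
  rw [core, core, core, add_smul, beta_add, map_add]

lemma core_add3 (hEC : IsExactContext lam' mu' m) (t₁ : T) (s₁ : S) (t₂ t₂' : T) (s₂ : S) :
    core hEC t₁ s₁ (t₂ + t₂') s₂ = core hEC t₁ s₁ t₂ s₂ + core hEC t₁ s₁ t₂' s₂ := by
  rw [core, core, core, op_add, add_smul, smul_add, beta_add, map_add]

/-- the key right-relation compatibility -/
lemma core_rel_right (hEC : IsExactContext lam' mu' m) (t₁ : T) (s₁ : S)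
    (a : T) (r : R) (b : S) :
    core hEC t₁ s₁ (a * mu' r) b = core hEC t₁ s₁ a (lam' r * b) := by
  obtain ⟨u, v, h⟩ := exists_decomp hEC (s₁ • (op a • m))
  have hdec : s₁ • (op (a * mu' r) • m) = (u * lam' r) • m + op (v * mu' r) • m := by
    rw [op_mul, mul_smul, smul_comm s₁ (op (mu' r)), h, smul_add]
    congr 1
    · rw [← smul_comm u (op (mu' r)) m, ← lam_smul_m hEC r, ← mul_smul]
    · rw [← mul_smul, ← op_mul]
  rw [core_spec hEC _ _ _ _ _ _ hdec, core_spec hEC _ _ _ _ _ _ h]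
  congr 1
  · rw [mul_assoc]
  · rw [← mul_assoc, eTS_rel]

/-- the key left-relation compatibility -/
lemma core_rel_left (hEC : IsExactContext lam' mu' m) (a : T) (r : R) (b : S)
    (t₂ : T) (s₂ : S) :
    core hEC (a * mu' r) b t₂ s₂ = core hEC a (lam' r * b) t₂ s₂ := by
  obtain ⟨u, v, h⟩ := exists_decomp hEC (b • (op t₂ • m))
  have hdec : (lam' r * b) • (op t₂ • m) = (lam' r * u) • m + op (mu' r * v) • m := by
    rw [mul_smul, h, smul_add, ← mul_smul]
    congr 1
    rw [smul_comm, lam_smul_m hEC r, ← mul_smul, ← op_mul]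
  rw [core_spec hEC _ _ _ _ _ _ hdec, core_spec hEC _ _ _ _ _ _ h]
  rw [mul_assoc (lam' r) u s₂, ← eTS_rel lam' mu' a r (u * s₂)]
  congr 2 <;> rw [mul_assoc]


noncomputable def innerBi (hEC : IsExactContext lam' mu' m) (t₁ : T) (s₁ : S) :
    T →+ S →+ TensTS lam' mu' :=
  AddMonoidHom.mk'
    (fun t₂ => AddMonoidHom.mk' (fun s₂ => core hEC t₁ s₁ t₂ s₂) (core_add4 hEC t₁ s₁ t₂))
    (fun t₂ t₂' => AddMonoidHom.ext fun s₂ => core_add3 hEC t₁ s₁ t₂ t₂' s₂)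

noncomputable def innerQ0 (hEC : IsExactContext lam' mu' m) (t₁ : T) (s₁ : S) :
    TensorProduct ℤ T S →+ TensTS lam' mu' :=
  TensorProduct.liftAddHom (innerBi hEC t₁ s₁)
    (fun n t s => by
      rw [map_zsmul, AddMonoidHom.smul_apply, ← map_zsmul])

lemma inner0_tmul (hEC : IsExactContext lam' mu' m) (t₁ : T) (s₁ : S) (t₂ : T) (s₂ : S) :
    innerQ0 hEC t₁ s₁ (t₂ ⊗ₜ[ℤ] s₂) = core hEC t₁ s₁ t₂ s₂ := rfl

noncomputable def innerQ (hEC : IsExactContext lam' mu' m) (t₁ : T) (s₁ : S) :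
    TensTS lam' mu' →+ TensTS lam' mu' :=
  QuotientAddGroup.lift _ (innerQ0 hEC t₁ s₁)
    (by
      apply (AddSubgroup.closure_le _).mpr
      rintro x ⟨a, r, b, rfl⟩
      have : innerQ0 hEC t₁ s₁ ((a * mu' r) ⊗ₜ[ℤ] b - a ⊗ₜ[ℤ] (lam' r * b)) = 0 := by
        rw [map_sub, inner0_tmul, inner0_tmul, sub_eq_zero]
        exact core_rel_right hEC t₁ s₁ a r b
      exact this)

lemma inner_apply (hEC : IsExactContext lam' mu' m) (t₁ : T) (s₁ : S) (t₂ : T) (s₂ : S) :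
    innerQ hEC t₁ s₁ (eTS lam' mu' t₂ s₂) = core hEC t₁ s₁ t₂ s₂ := rfl

lemma inner_add1 (hEC : IsExactContext lam' mu' m) (t₁ t₁' : T) (s₁ : S) :
    innerQ hEC (t₁ + t₁') s₁ = innerQ hEC t₁ s₁ + innerQ hEC t₁' s₁ := by
  apply AddMonoidHom.ext
  intro z
  induction z using indTS lam' mu' with
  | h0 => simp
  | hp t s => rw [AddMonoidHom.add_apply, inner_apply, inner_apply, inner_apply]
              exact core_add1 hEC t₁ t₁' s₁ t s
  | hadd a b ha hb => rw [map_add, ha, hb, AddMonoidHom.add_apply, AddMonoidHom.add_apply,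
                         AddMonoidHom.add_apply, map_add, map_add]; abel

lemma inner_add2 (hEC : IsExactContext lam' mu' m) (t₁ : T) (s₁ s₁' : S) :
    innerQ hEC t₁ (s₁ + s₁') = innerQ hEC t₁ s₁ + innerQ hEC t₁ s₁' := by
  apply AddMonoidHom.ext
  intro z
  induction z using indTS lam' mu' with
  | h0 => simp
  | hp t s => rw [AddMonoidHom.add_apply, inner_apply, inner_apply, inner_apply]
              exact core_add2 hEC t₁ s₁ s₁' t s
  | hadd a b ha hb => rw [map_add, ha, hb, AddMonoidHom.add_apply, AddMonoidHom.add_apply,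
                         AddMonoidHom.add_apply, map_add, map_add]; abel

noncomputable def outerBi (hEC : IsExactContext lam' mu' m) :
    T →+ S →+ (TensTS lam' mu' →+ TensTS lam' mu') :=
  AddMonoidHom.mk'
    (fun t₁ => AddMonoidHom.mk' (fun s₁ => innerQ hEC t₁ s₁) (inner_add2 hEC t₁))
    (fun t₁ t₁' => AddMonoidHom.ext fun s₁ => inner_add1 hEC t₁ t₁' s₁)

noncomputable def outer0 (hEC : IsExactContext lam' mu' m) :
    TensorProduct ℤ T S →+ (TensTS lam' mu' →+ TensTS lam' mu') :=
  TensorProduct.liftAddHom (outerBi hEC)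
    (fun n t s => by
      rw [map_zsmul, AddMonoidHom.smul_apply, ← map_zsmul])

lemma outer0_tmul (hEC : IsExactContext lam' mu' m) (t₁ : T) (s₁ : S) :
    outer0 hEC (t₁ ⊗ₜ[ℤ] s₁) = innerQ hEC t₁ s₁ := rfl

noncomputable def mulH (hEC : IsExactContext lam' mu' m) :
    TensTS lam' mu' →+ (TensTS lam' mu' →+ TensTS lam' mu') :=
  QuotientAddGroup.lift _ (outer0 hEC)
    (by
      apply (AddSubgroup.closure_le _).mpr
      rintro x ⟨a, r, b, rfl⟩
      have : outer0 hEC ((a * mu' r) ⊗ₜ[ℤ] b - a ⊗ₜ[ℤ] (lam' r * b)) = 0 := by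
        rw [map_sub, outer0_tmul, outer0_tmul, sub_eq_zero]
        apply AddMonoidHom.ext
        intro z
        induction z using indTS lam' mu' with
        | h0 => simp
        | hp t s => rw [inner_apply, inner_apply]
                    exact core_rel_left hEC a r b t s
        | hadd c d hc hd => rw [map_add, map_add, hc, hd]
      exact this)

lemma mulH_apply (hEC : IsExactContext lam' mu' m) (t₁ : T) (s₁ : S) (t₂ : T) (s₂ : S) :
    mulH hEC (eTS lam' mu' t₁ s₁) (eTS lam' mu' t₂ s₂) = core hEC t₁ s₁ t₂ s₂ := rfl

lemma mulH_assoc_pure (hEC : IsExactContext lam' mu' m)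
    (t₁ : T) (s₁ : S) (t₂ : T) (s₂ : S) (t₃ : T) (s₃ : S) :
    mulH hEC (mulH hEC (eTS lam' mu' t₁ s₁) (eTS lam' mu' t₂ s₂)) (eTS lam' mu' t₃ s₃)
      = mulH hEC (eTS lam' mu' t₁ s₁) (mulH hEC (eTS lam' mu' t₂ s₂) (eTS lam' mu' t₃ s₃)) := by
  obtain ⟨u₁, v₁, h₁⟩ := exists_decomp hEC (s₁ • (op t₂ • m))
  obtain ⟨u₂, v₂, h₂⟩ := exists_decomp hEC (s₂ • (op t₃ • m))
  obtain ⟨u₃, v₃, h₃⟩ := exists_decomp hEC (u₁ • (op v₂ • m))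
  have hL : (u₁ * s₂) • (op t₃ • m) = (u₁ * u₂ + u₃) • m + op v₃ • m := by
    rw [mul_smul, h₂, smul_add, ← mul_smul, h₃, add_smul]
    abel
  have hR : s₁ • (op (t₂ * v₂) • m) = u₃ • m + op (v₃ + v₁ * v₂) • m := by
    rw [op_mul, mul_smul, smul_comm s₁ (op v₂), h₁, smul_add,
      ← smul_comm u₁ (op v₂) m, h₃, ← mul_smul, ← op_mul, op_add, add_smul]
    abel
  conv_lhs => rw [mulH_apply, core_spec hEC t₁ s₁ t₂ s₂ u₁ v₁ h₁]
  rw [map_add, AddMonoidHom.add_apply, mulH_apply, mulH_apply,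
    core_spec hEC t₁ (u₁ * s₂) t₃ s₃ _ _ hL,
    core_spec hEC (t₁ * v₁) s₂ t₃ s₃ u₂ v₂ h₂]
  conv_rhs => rw [mulH_apply hEC t₂ s₂ t₃ s₃, core_spec hEC t₂ s₂ t₃ s₃ u₂ v₂ h₂]
  rw [map_add, mulH_apply, mulH_apply,
    core_spec hEC t₁ s₁ t₂ (u₂ * s₃) u₁ v₁ h₁,
    core_spec hEC t₁ s₁ (t₂ * v₂) s₃ _ _ hR]
  simp only [eTS_add_left', eTS_add_right', add_mul, mul_add, mul_assoc]
  abel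

end Beta

/-- For an exact context `(λ, μ, M, m)`, the operation `∘` on
`T ⊗_R S` given by `(t₁ ⊗ s₁) ∘ (t₂ ⊗ s₂) = t₁ · δ(s₁ ⊗ t₂) · s₂`, where
`δ(s ⊗ t) = 1 ⊗ s' + t' ⊗ 1` for any decomposition `s·m·t = s'·m + m·t'`, is
well defined, biadditive, associative and makes `T ⊗_R S` an associative unital
ring with identity `1 ⊗ 1` (the noncommutative tensor product `T ⊠_R S`). -/
theorem stmt4 {M : Type u} [AddCommGroup M] [Module S M] [Module Tᵐᵒᵖ M]
    [SMulCommClass S Tᵐᵒᵖ M]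
    (lam : R →+* S) (mu : R →+* T) (m : M)
    (hEC : IsExactContext lam mu m) :
    ∃ mul : TensTS lam mu → TensTS lam mu → TensTS lam mu,
      (∀ (t₁ : T) (s₁ : S) (t₂ : T) (s₂ : S) (u : S) (v : T),
          s₁ • (op t₂ • m) = u • m + op v • m →
          mul (eTS lam mu t₁ s₁) (eTS lam mu t₂ s₂) =
            eTS lam mu t₁ (u * s₂) + eTS lam mu (t₁ * v) s₂) ∧
      (∀ x y z : TensTS lam mu, mul (x + y) z = mul x z + mul y z) ∧
      (∀ x y z : TensTS lam mu, mul x (y + z) = mul x y + mul x z) ∧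
      (∀ x y z : TensTS lam mu, mul (mul x y) z = mul x (mul y z)) ∧
      (∀ x : TensTS lam mu, mul (eTS lam mu 1 1) x = x) ∧
      (∀ x : TensTS lam mu, mul x (eTS lam mu 1 1) = x) := by
  refine ⟨fun x y => mulH hEC x y, ?_, ?_, ?_, ?_, ?_, ?_⟩
  · intro t₁ s₁ t₂ s₂ u v h
    show mulH hEC (eTS lam mu t₁ s₁) (eTS lam mu t₂ s₂) = _
    rw [mulH_apply]
    exact core_spec hEC t₁ s₁ t₂ s₂ u v h
  · intro x y z
    show mulH hEC (x + y) z = mulH hEC x z + mulH hEC y z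
    rw [map_add, AddMonoidHom.add_apply]
  · intro x y z
    exact map_add (mulH hEC x) y z
  · intro x y z
    show mulH hEC (mulH hEC x y) z = mulH hEC x (mulH hEC y z)
    induction x using indTS lam mu with
    | h0 => simp
    | hadd a b ha hb => simp only [map_add, AddMonoidHom.add_apply, ha, hb]
    | hp t₁ s₁ =>
      induction y using indTS lam mu with
      | h0 => simp
      | hadd a b ha hb => simp only [map_add, AddMonoidHom.add_apply, ha, hb]
      | hp t₂ s₂ =>
        induction z using indTS lam mu with
        | h0 => simp
        | hadd a b ha hb => simp only [map_add, AddMonoidHom.add_apply, ha, hb]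
        | hp t₃ s₃ => exact mulH_assoc_pure hEC t₁ s₁ t₂ s₂ t₃ s₃
  · intro x
    show mulH hEC (eTS lam mu 1 1) x = x
    induction x using indTS lam mu with
    | h0 => simp
    | hadd a b ha hb => rw [map_add, ha, hb]
    | hp t s =>
      have h : (1 : S) • (op t • m) = (0 : S) • m + op t • m := by
        rw [one_smul, zero_smul, zero_add]
      rw [mulH_apply, core_spec hEC 1 1 t s 0 t h, zero_mul, one_mul,
        eTS_zero_right, zero_add]
  · intro x
    show mulH hEC x (eTS lam mu 1 1) = x
    induction x using indTS lam mu with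
    | h0 => simp
    | hadd a b ha hb => rw [map_add, AddMonoidHom.add_apply, ha, hb]
    | hp t s =>
      have h : s • (op (1 : T) • m) = s • m + op (0 : T) • m := by
        rw [op_one, one_smul, op_zero, zero_smul, add_zero]
      rw [mulH_apply, core_spec hEC t s 1 1 s 0 h, mul_one, mul_zero,
        eTS_zero_left, add_zero]

end
end

section
/- Let R ⊆ S be an extension of rings (subring with the same identity), and let π: S → S/R be the canonical projection of left R-modules. Then π is a rigid morphism; that is, Hom_R(S, S/R) = End_R(S)·π + π·End_R(S/R), where End_R(S) acts by precomposition and End_R(S/R) by postcomposition. -/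
/-- Let `R ⊆ S` be an extension of rings and `π : S → S/R` the
canonical projection of left `R`-modules.  Then `π` is a rigid morphism:
`Hom_R(S, S/R) = End_R(S)·π + π·End_R(S/R)`.  The left `R`-module structure on the
quotient group `S/R` is given by `act r (class s) = class (r·s)`. -/
theorem stmt10 {S : Type*} [Ring S] (R : Subring S)
    (act : R → (S ⧸ R.toAddSubgroup) → (S ⧸ R.toAddSubgroup))
    (hact : ∀ (r : R) (s : S),
      act r (QuotientAddGroup.mk s) = QuotientAddGroup.mk ((r : S) * s)) :
    ∀ f : S →+ S ⧸ R.toAddSubgroup,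
      (∀ (r : R) (s : S), f ((r : S) * s) = act r (f s)) →
      ∃ (g : S →+ S) (h : (S ⧸ R.toAddSubgroup) →+ (S ⧸ R.toAddSubgroup)),
        (∀ (r : R) (s : S), g ((r : S) * s) = (r : S) * g s) ∧
        (∀ (r : R) (x : S ⧸ R.toAddSubgroup), h (act r x) = act r (h x)) ∧
        (∀ s : S, f s = QuotientAddGroup.mk (g s) + h (QuotientAddGroup.mk s)) := by
  intro f hf
  obtain ⟨x, hx⟩ := QuotientAddGroup.mk_surjective (f 1)
  set π := QuotientAddGroup.mk' R.toAddSubgroup with hπ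
  set k : S →+ S ⧸ R.toAddSubgroup :=
    f - π.comp (AddMonoidHom.mulRight x) with hkdef
  have hkapp : ∀ s : S, k s = f s - QuotientAddGroup.mk (s * x) := by
    intro s; rfl
  have hfr : ∀ r : R, f (r : S) = QuotientAddGroup.mk ((r : S) * x) := by
    intro r
    have := hf r 1
    rw [mul_one] at this
    rw [this, ← hx, hact]
  have hker : R.toAddSubgroup ≤ k.ker := by
    intro r hr
    rw [AddMonoidHom.mem_ker, hkapp, hfr ⟨r, hr⟩, sub_self]
  refine ⟨AddMonoidHom.mulRight x, QuotientAddGroup.lift _ k hker, ?_, ?_, ?_⟩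
  · intro r s
    simp [mul_assoc]
  · intro r y
    obtain ⟨s, rfl⟩ := QuotientAddGroup.mk_surjective y
    rw [hact]
    show k ((r : S) * s) = act r (k s)
    obtain ⟨t, ht⟩ := QuotientAddGroup.mk_surjective (f s)
    have h1 : k s = QuotientAddGroup.mk (t - s * x) := by
      rw [hkapp, ← ht, ← QuotientAddGroup.mk_sub]
    rw [hkapp, hf r s, ← ht, hact, h1, hact, mul_sub, ← QuotientAddGroup.mk_sub,
      mul_assoc]
  · intro s
    show f s = QuotientAddGroup.mk (s * x) + k s
    rw [hkapp, add_sub_cancel]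
end

section
/- Let λ: R → S be a ring epimorphism. If R is commutative, then S is commutative. -/
universe u

/-- For `y : S`, the map `s ↦ !![s, s*y - y*s; 0, s]` is a ring homomorphism into
the ring of 2×2 matrices over `S`. -/
def stmt13Aux {S : Type u} [Ring S] (y : S) : S →+* Matrix (Fin 2) (Fin 2) S where
  toFun s := !![s, s * y - y * s; 0, s]
  map_one' := by
    ext i j
    fin_cases i <;> fin_cases j <;> simp [Matrix.one_apply]
  map_mul' s t := by
    rw [Matrix.mul_fin_two]
    ext i j
    fin_cases i <;> fin_cases j <;> simp <;> noncomm_ring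
  map_zero' := by
    ext i j
    fin_cases i <;> fin_cases j <;> simp
  map_add' s t := by
    ext i j
    fin_cases i <;> fin_cases j <;> simp <;> noncomm_ring

/-- If `y` commutes with everything in the image of an epimorphism `lam`, then `y`
is central. -/
theorem stmt13Key {R S : Type u} [CommRing R] [Ring S] (lam : R →+* S)
    (hepi : ∀ (T : Type u) [Ring T], ∀ f g : S →+* T, f.comp lam = g.comp lam → f = g)
    (y : S) (hy : ∀ r : R, lam r * y = y * lam r) : ∀ s : S, s * y = y * s := by
  have h := hepi (Matrix (Fin 2) (Fin 2) S) (stmt13Aux 0) (stmt13Aux y) ?_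
  · intro s
    have := congrArg (fun f : S →+* Matrix (Fin 2) (Fin 2) S => f s 0 1) h
    simp only [stmt13Aux, RingHom.coe_mk, MonoidHom.coe_mk, OneHom.coe_mk] at this
    have h01 : (0 : S) = s * y - y * s := by
      simpa using this
    exact sub_eq_zero.mp h01.symm
  · refine RingHom.ext fun r => Matrix.ext fun i j => ?_
    simp only [RingHom.comp_apply, stmt13Aux, RingHom.coe_mk, MonoidHom.coe_mk, OneHom.coe_mk]
    fin_cases i <;> fin_cases j <;> simp [sub_eq_zero, hy r]

/-- Let `λ : R → S` be a ring epimorphism (an epimorphism in the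
category of unital rings).  If `R` is commutative, then `S` is commutative. -/
theorem stmt13 {R S : Type u} [CommRing R] [Ring S] (lam : R →+* S)
    (hepi : ∀ (T : Type u) [Ring T], ∀ f g : S →+* T, f.comp lam = g.comp lam → f = g) :
    ∀ x y : S, x * y = y * x := by
  -- Step 1: the image of `lam` is central.
  have hcen : ∀ (r : R) (s : S), s * lam r = lam r * s := by
    intro r
    exact stmt13Key lam hepi (lam r) (fun r' => by rw [← map_mul, ← map_mul, mul_comm])
  -- Step 2: every element is central.
  intro x y
  exact stmt13Key lam hepi y (fun r => (hcen r y).symm) x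
end

section
/- Let (A, C, X, Y, f, g) be a Morita context with associated Morita context ring Γ = [[A, X],[Y, C]]. Let R be the diagonal subring [[A,0],[0,C]], S the upper triangular subring [[A,X],[0,C]], T the lower triangular subring [[A,0],[Y,C]], M = Γ as an (S,T)-bimodule, and m the identity matrix. Then (incl_S, incl_T, M, m) is an exact context, i.e. 0 → R → S ⊕ T → Γ → 0 is exact with maps r ↦ (r, r) and (s, t) ↦ sm − mt. -/
open MulOpposite

/-- Let `(A, C, X, Y, f, g)` be a Morita context with Morita context
ring `Γ = [[A, X], [Y, C]]` (realized as `A × X × Y × C` with the matrix-style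
multiplication `mulG`).  Let `R` be the diagonal subring, `S` the upper triangular
subring (elements with vanishing `Y`-component), `T` the lower triangular subring
(elements with vanishing `X`-component), `M = Γ` as an `(S,T)`-bimodule and `m` the
identity matrix `(1,0,0,1)`.  Then `(incl_S, incl_T, M, m)` is an exact context:
`0 → R → S ⊕ T → Γ → 0` is exact, with maps `r ↦ (r, r)` and `(s, t) ↦ s·m − m·t`. -/
theorem stmt15 {A C X Y : Type*} [Ring A] [Ring C]
    [AddCommGroup X] [AddCommGroup Y]
    [Module A X] [Module Cᵐᵒᵖ X] [SMulCommClass A Cᵐᵒᵖ X]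
    [Module C Y] [Module Aᵐᵒᵖ Y] [SMulCommClass C Aᵐᵒᵖ Y]
    (f : X →+ Y →+ A) (g : Y →+ X →+ C)
    (hfA : ∀ (a : A) (x : X) (y : Y), f (a • x) y = a * f x y)
    (hfC : ∀ (c : C) (x : X) (y : Y), f (op c • x) y = f x (c • y))
    (hfA' : ∀ (a : A) (x : X) (y : Y), f x (op a • y) = f x y * a)
    (hgC : ∀ (c : C) (y : Y) (x : X), g (c • y) x = c * g y x)
    (hgA : ∀ (a : A) (y : Y) (x : X), g (op a • y) x = g y (a • x))
    (hgC' : ∀ (c : C) (y : Y) (x : X), g y (op c • x) = g y x * c)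
    (hassoc1 : ∀ (x₁ : X) (y₁ : Y) (x₂ : X), f x₁ y₁ • x₂ = op (g y₁ x₂) • x₁)
    (hassoc2 : ∀ (y₁ : Y) (x₁ : X) (y₂ : Y), g y₁ x₁ • y₂ = op (f x₁ y₂) • y₁)
    (mulG : (A × X × Y × C) → (A × X × Y × C) → (A × X × Y × C))
    (hmul : ∀ p q : A × X × Y × C, mulG p q =
      (p.1 * q.1 + f p.2.1 q.2.2.1,
       p.1 • q.2.1 + op q.2.2.2 • p.2.1,
       p.2.2.2 • q.2.2.1 + op q.1 • p.2.2.1,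
       p.2.2.2 * q.2.2.2 + g p.2.2.1 q.2.1)) :
    Function.Injective (fun p : A × C =>
      (((p.1, 0, 0, p.2) : A × X × Y × C), ((p.1, 0, 0, p.2) : A × X × Y × C))) ∧
    (∀ s t : A × X × Y × C, s.2.2.1 = 0 → t.2.1 = 0 →
      (mulG s ((1, 0, 0, 1) : A × X × Y × C) = mulG ((1, 0, 0, 1) : A × X × Y × C) t ↔
        ∃ (a : A) (c : C), s = (a, 0, 0, c) ∧ t = (a, 0, 0, c))) ∧
    (∀ γ : A × X × Y × C, ∃ s t : A × X × Y × C, s.2.2.1 = 0 ∧ t.2.1 = 0 ∧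
      γ = mulG s ((1, 0, 0, 1) : A × X × Y × C) -
          mulG ((1, 0, 0, 1) : A × X × Y × C) t) := by
  have h1 : ∀ p : A × X × Y × C, mulG p (1, 0, 0, 1) = p := by
    intro p
    rw [hmul]
    simp
  have h2 : ∀ q : A × X × Y × C, mulG (1, 0, 0, 1) q = q := by
    intro q
    rw [hmul]
    simp
  refine ⟨?_, ?_, ?_⟩
  · intro p q h
    simp only [Prod.mk.injEq] at h
    exact Prod.ext h.1.1 h.1.2.2.2
  · intro s t hs ht
    rw [h1, h2]
    constructor
    · rintro rfl
      exact ⟨s.1, s.2.2.2, by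
        obtain ⟨a, x, y, c⟩ := s
        simp_all, by
        obtain ⟨a, x, y, c⟩ := s
        simp_all⟩
    · rintro ⟨a, c, rfl, rfl⟩; rfl
  · intro γ
    exact ⟨(γ.1, γ.2.1, 0, γ.2.2.2), (0, 0, -γ.2.2.1, 0), rfl, rfl, by
      rw [h1, h2]
      obtain ⟨a, x, y, c⟩ := γ
      simp⟩
end

section
/- Let R ⊆ S and R ⊆ T be strictly pure extensions with S = R ⊕ X and T = R ⊕ Y, where X is an ideal of S, Y is an ideal of T, and the decompositions are of (R,R)-bimodules. Define a multiplication on M := R ⊕ X ⊕ Y by (r₁+x₁+y₁)(r₂+x₂+y₂) = r₁r₂ + (r₁x₂ + x₁r₂ + x₁x₂) + (r₁y₂ + y₁r₂ + y₁y₂). Then M is an associative unital ring containing S and T as subrings, and (incl_S, incl_T, M, 1) is an exact context. -/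
universe u


/-- Auxiliary subring of `S × T` used in the proof of `stmt16`. -/
def stmt16Sub {R S T : Type u} [Ring R] [Ring S] [Ring T]
    (lam : R →+* S) (mu : R →+* T)
    (X : AddSubgroup S) (Y : AddSubgroup T)
    (hXl : ∀ s : S, ∀ x ∈ X, s * x ∈ X) (hXr : ∀ s : S, ∀ x ∈ X, x * s ∈ X)
    (hYl : ∀ t : T, ∀ y ∈ Y, t * y ∈ Y) (hYr : ∀ t : T, ∀ y ∈ Y, y * t ∈ Y) :
    Subring (S × T) where
  carrier := {p | ∃ (r : R) (x : X) (y : Y), p.1 = lam r + (x : S) ∧ p.2 = mu r + (y : T)}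
  one_mem' := ⟨1, 0, 0, by simp, by simp⟩
  zero_mem' := ⟨0, 0, 0, by simp, by simp⟩
  mul_mem' := by
    rintro a b ⟨r₁, x₁, y₁, ha1, ha2⟩ ⟨r₂, x₂, y₂, hb1, hb2⟩
    refine ⟨r₁ * r₂,
      ⟨lam r₁ * (x₂ : S) + (x₁ : S) * lam r₂ + (x₁ : S) * (x₂ : S),
        X.add_mem (X.add_mem (hXl _ _ x₂.2) (hXr _ _ x₁.2)) (hXl _ _ x₂.2)⟩,
      ⟨mu r₁ * (y₂ : T) + (y₁ : T) * mu r₂ + (y₁ : T) * (y₂ : T),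
        Y.add_mem (Y.add_mem (hYl _ _ y₂.2) (hYr _ _ y₁.2)) (hYl _ _ y₂.2)⟩, ?_, ?_⟩
    · simp only [Prod.fst_mul, ha1, hb1]
      rw [map_mul]; noncomm_ring
    · simp only [Prod.snd_mul, ha2, hb2]
      rw [map_mul]; noncomm_ring
  add_mem' := by
    rintro a b ⟨r₁, x₁, y₁, ha1, ha2⟩ ⟨r₂, x₂, y₂, hb1, hb2⟩
    refine ⟨r₁ + r₂, x₁ + x₂, y₁ + y₂, ?_, ?_⟩
    · simp only [Prod.fst_add, ha1, hb1]; push_cast [map_add]; abel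
    · simp only [Prod.snd_add, ha2, hb2]; push_cast [map_add]; abel
  neg_mem' := by
    rintro a ⟨r, x, y, ha1, ha2⟩
    refine ⟨-r, -x, -y, ?_, ?_⟩
    · simp only [Prod.fst_neg, ha1]; push_cast [map_neg]; abel
    · simp only [Prod.snd_neg, ha2]; push_cast [map_neg]; abel

/-- Let `R ⊆ S` and `R ⊆ T` be strictly pure extensions (realized by
injective ring homomorphisms `λ : R → S`, `μ : R → T`), with decompositions
`S = R ⊕ X` and `T = R ⊕ Y` of `(R,R)`-bimodules, where `X` is an ideal of `S` and
`Y` an ideal of `T`.  Then `M := R ⊕ X ⊕ Y`, equipped with the multiplication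
`(r₁+x₁+y₁)(r₂+x₂+y₂) = r₁r₂ + (r₁x₂+x₁r₂+x₁x₂) + (r₁y₂+y₁r₂+y₁y₂)` (so that
`X·Y = Y·X = 0`), is an associative unital ring containing `S` and `T` as subrings,
and `(incl_S, incl_T, M, 1)` is an exact context. -/
theorem stmt16 {R S T : Type u} [Ring R] [Ring S] [Ring T]
    (lam : R →+* S) (mu : R →+* T)
    (hlam : Function.Injective lam) (hmu : Function.Injective mu)
    (X : AddSubgroup S) (Y : AddSubgroup T)
    (hXl : ∀ s : S, ∀ x ∈ X, s * x ∈ X) (hXr : ∀ s : S, ∀ x ∈ X, x * s ∈ X)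
    (hYl : ∀ t : T, ∀ y ∈ Y, t * y ∈ Y) (hYr : ∀ t : T, ∀ y ∈ Y, y * t ∈ Y)
    (hSdec : ∀ s : S, ∃! p : R × X, s = lam p.1 + (p.2 : S))
    (hTdec : ∀ t : T, ∃! p : R × Y, t = mu p.1 + (p.2 : T)) :
    ∃ (M : RingCat.{u}) (ιS : S →+* M) (ιT : T →+* M),
      Function.Injective ιS ∧ Function.Injective ιT ∧
      ιS.comp lam = ιT.comp mu ∧
      (∀ x ∈ X, ∀ y ∈ Y, ιS x * ιT y = 0 ∧ ιT y * ιS x = 0) ∧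
      Function.Injective (fun r : R => (lam r, mu r)) ∧
      (∀ (s : S) (t : T), ιS s * 1 = 1 * ιT t ↔ ∃ r : R, lam r = s ∧ mu r = t) ∧
      (∀ m : M, ∃ (s : S) (t : T), m = ιS s * 1 - 1 * ιT t) := by
  classical
  choose f hf hfu using hSdec
  choose g hg hgu using hTdec
  have hfu' : ∀ (r : R) (x : X), f (lam r + (x : S)) = (r, x) := fun r x => (hfu _ (r, x) rfl).symm
  have hgu' : ∀ (r : R) (y : Y), g (mu r + (y : T)) = (r, y) := fun r y => (hgu _ (r, y) rfl).symm
  have hf1 : f 1 = (1, 0) := by simpa using hfu' 1 0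
  have hg1 : g 1 = (1, 0) := by simpa using hgu' 1 0
  have hf0 : f 0 = (0, 0) := by simpa using hfu' 0 0
  have hg0 : g 0 = (0, 0) := by simpa using hgu' 0 0
  have hflam : ∀ r : R, f (lam r) = (r, 0) := fun r => by simpa using hfu' r 0
  have hgmu : ∀ r : R, g (mu r) = (r, 0) := fun r => by simpa using hgu' r 0
  have hfX : ∀ x : X, f (x : S) = (0, x) := fun x => by simpa using hfu' 0 x
  have hgY : ∀ y : Y, g (y : T) = (0, y) := fun y => by simpa using hgu' 0 y
  -- membership of the X-part of a product
  have xmem : ∀ (r₁ r₂ : R) (x₁ x₂ : X),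
      lam r₁ * (x₂ : S) + (x₁ : S) * lam r₂ + (x₁ : S) * (x₂ : S) ∈ X :=
    fun r₁ r₂ x₁ x₂ => X.add_mem (X.add_mem (hXl _ _ x₂.2) (hXr _ _ x₁.2)) (hXl _ _ x₂.2)
  have ymem : ∀ (r₁ r₂ : R) (y₁ y₂ : Y),
      mu r₁ * (y₂ : T) + (y₁ : T) * mu r₂ + (y₁ : T) * (y₂ : T) ∈ Y :=
    fun r₁ r₂ y₁ y₂ => Y.add_mem (Y.add_mem (hYl _ _ y₂.2) (hYr _ _ y₁.2)) (hYl _ _ y₂.2)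
  have hmulS : ∀ (r₁ r₂ : R) (x₁ x₂ : X),
      (lam r₁ + (x₁ : S)) * (lam r₂ + (x₂ : S)) =
        lam (r₁ * r₂) + (lam r₁ * (x₂ : S) + (x₁ : S) * lam r₂ + (x₁ : S) * (x₂ : S)) := by
    intro r₁ r₂ x₁ x₂; rw [map_mul]; noncomm_ring
  have hmulT : ∀ (r₁ r₂ : R) (y₁ y₂ : Y),
      (mu r₁ + (y₁ : T)) * (mu r₂ + (y₂ : T)) =
        mu (r₁ * r₂) + (mu r₁ * (y₂ : T) + (y₁ : T) * mu r₂ + (y₁ : T) * (y₂ : T)) := by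
    intro r₁ r₂ y₁ y₂; rw [map_mul]; noncomm_ring
  -- first components of f, g are multiplicative and additive
  have hfmul : ∀ s₁ s₂ : S, (f (s₁ * s₂)).1 = (f s₁).1 * (f s₂).1 := by
    intro s₁ s₂
    have h : f (s₁ * s₂) = ((f s₁).1 * (f s₂).1,
        ⟨_, xmem (f s₁).1 (f s₂).1 (f s₁).2 (f s₂).2⟩) := by
      refine (hfu _ _ ?_).symm
      show _ = _
      conv_lhs => rw [hf s₁, hf s₂]
      exact hmulS _ _ _ _
    rw [h]
  have hgmul : ∀ t₁ t₂ : T, (g (t₁ * t₂)).1 = (g t₁).1 * (g t₂).1 := by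
    intro t₁ t₂
    have h : g (t₁ * t₂) = ((g t₁).1 * (g t₂).1,
        ⟨_, ymem (g t₁).1 (g t₂).1 (g t₁).2 (g t₂).2⟩) := by
      refine (hgu _ _ ?_).symm
      show _ = _
      conv_lhs => rw [hg t₁, hg t₂]
      exact hmulT _ _ _ _
    rw [h]
  have hfadd : ∀ s₁ s₂ : S, (f (s₁ + s₂)).1 = (f s₁).1 + (f s₂).1 := by
    intro s₁ s₂
    have h : f (s₁ + s₂) = ((f s₁).1 + (f s₂).1, (f s₁).2 + (f s₂).2) := by
      refine (hfu _ _ ?_).symm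
      show _ = _
      conv_lhs => rw [hf s₁, hf s₂]
      push_cast [map_add]
      abel
    rw [h]
  have hgadd : ∀ t₁ t₂ : T, (g (t₁ + t₂)).1 = (g t₁).1 + (g t₂).1 := by
    intro t₁ t₂
    have h : g (t₁ + t₂) = ((g t₁).1 + (g t₂).1, (g t₁).2 + (g t₂).2) := by
      refine (hgu _ _ ?_).symm
      show _ = _
      conv_lhs => rw [hg t₁, hg t₂]
      push_cast [map_add]
      abel
    rw [h]
  set Msub := stmt16Sub lam mu X Y hXl hXr hYl hYr with hMsub_def
  have memM : ∀ p : S × T, p ∈ Msub ↔ ∃ (r : R) (x : X) (y : Y), p.1 = lam r + (x : S) ∧ p.2 = mu r + (y : T) := fun p => Iff.rfl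
  -- the inclusions
  let ιS : S →+* ↥Msub :=
  { toFun := fun s => ⟨(s, mu (f s).1), (f s).1, (f s).2, 0, hf s, by simp⟩
    map_one' := by
      apply Subtype.ext
      refine Prod.ext rfl ?_
      show mu (f 1).1 = 1
      rw [hf1]; exact map_one mu
    map_mul' := by
      intro s₁ s₂
      apply Subtype.ext
      refine Prod.ext rfl ?_
      show mu (f (s₁ * s₂)).1 = mu (f s₁).1 * mu (f s₂).1
      rw [hfmul, map_mul]
    map_zero' := by
      apply Subtype.ext
      refine Prod.ext rfl ?_
      show mu (f 0).1 = 0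
      rw [hf0]; exact map_zero mu
    map_add' := by
      intro s₁ s₂
      apply Subtype.ext
      refine Prod.ext rfl ?_
      show mu (f (s₁ + s₂)).1 = mu (f s₁).1 + mu (f s₂).1
      rw [hfadd, map_add] }
  let ιT : T →+* ↥Msub :=
  { toFun := fun t => ⟨(lam (g t).1, t), (g t).1, 0, (g t).2, by simp, hg t⟩
    map_one' := by
      apply Subtype.ext
      refine Prod.ext ?_ rfl
      show lam (g 1).1 = 1
      rw [hg1]; exact map_one lam
    map_mul' := by
      intro t₁ t₂
      apply Subtype.ext
      refine Prod.ext ?_ rfl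
      show lam (g (t₁ * t₂)).1 = lam (g t₁).1 * lam (g t₂).1
      rw [hgmul, map_mul]
    map_zero' := by
      apply Subtype.ext
      refine Prod.ext ?_ rfl
      show lam (g 0).1 = 0
      rw [hg0]; exact map_zero lam
    map_add' := by
      intro t₁ t₂
      apply Subtype.ext
      refine Prod.ext ?_ rfl
      show lam (g (t₁ + t₂)).1 = lam (g t₁).1 + lam (g t₂).1
      rw [hgadd, map_add] }
  refine ⟨RingCat.of Msub, ιS, ιT, ?_, ?_, ?_, ?_, ?_, ?_, ?_⟩
  · intro a b h
    exact congrArg (fun m : Msub => (m : S × T).1) h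
  · intro a b h
    exact congrArg (fun m : Msub => (m : S × T).2) h
  · refine RingHom.ext fun r => ?_
    apply Subtype.ext
    refine Prod.ext ?_ ?_
    · show lam r = lam (g (mu r)).1
      rw [hgmu]
    · show mu (f (lam r)).1 = mu r
      rw [hflam]
  · intro x hx y hy
    constructor
    · apply Subtype.ext
      apply Prod.ext
      · show (x : S) * lam (g y).1 = 0
        rw [hgY ⟨y, hy⟩]; simp
      · show mu (f x).1 * y = 0
        rw [hfX ⟨x, hx⟩]; simp
    · apply Subtype.ext
      apply Prod.ext
      · show lam (g y).1 * x = 0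
        rw [hgY ⟨y, hy⟩]; simp
      · show y * mu (f x).1 = 0
        rw [hfX ⟨x, hx⟩]; simp
  · intro a b h
    exact hlam (congrArg Prod.fst h)
  · intro s t
    rw [mul_one, one_mul]
    constructor
    · intro h
      have h1 : s = lam (g t).1 := congrArg (fun m : Msub => (m : S × T).1) h
      have h2 : mu (f s).1 = t := congrArg (fun m : Msub => (m : S × T).2) h
      refine ⟨(g t).1, h1.symm, ?_⟩
      have he : (f s).1 = (g t).1 := by rw [h1, hflam]
      rw [← he, h2]
    · rintro ⟨r, hr1, hr2⟩
      apply Subtype.ext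
      refine Prod.ext ?_ ?_
      · show s = lam (g t).1
        rw [← hr2, hgmu, ← hr1]
      · show mu (f s).1 = t
        rw [← hr1, hflam, hr2]
  · rintro ⟨⟨a, b⟩, r, x, y, hm1, hm2⟩
    simp only at hm1 hm2
    refine ⟨lam r + (x : S), -(y : T), ?_⟩
    rw [mul_one, one_mul]
    apply Subtype.ext
    refine Prod.ext ?_ ?_
    · show a = (lam r + (x : S)) - lam (g (-(y : T))).1
      have hy : (-(y : T)) = mu 0 + ((-y : Y) : T) := by push_cast; simp
      rw [hy, hgu' 0 (-y)]
      simp [hm1]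
    · show b = mu (f (lam r + (x : S))).1 - (-(y : T))
      rw [hfu' r x]
      simp only [hm2]
      abel
end

section
/- Let R ⊆ S be an extension of rings with inclusion λ, π: S → S/R the canonical surjection of R-modules, S' = End_R(S/R), and λ': R → S' defined by λ'(r) = (x ↦ xr). Then the sequence 0 → R → S ⊕ S' → Hom_R(S, S/R) → 0, with maps r ↦ (λ(r), λ'(r)) and (s, f) ↦ (·s)∘π − π∘f, is exact; i.e. (λ, λ', Hom_R(S, S/R), π) is an exact context. -/
/-- Let `R ⊆ S` be an extension of rings, `π : S → S/R` the
canonical surjection of left `R`-modules, `S' = End_R(S/R)` and `λ' : R → S'`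
given by right multiplication (`λ'(r) : x ↦ x·r`, encoded by `ract`).  Then the
sequence `0 → R → S ⊕ S' → Hom_R(S, S/R) → 0`, with maps `r ↦ ((r : S), λ'(r))`
and `(s, f) ↦ (·s)∘π − π∘f`, is exact; that is, `(λ, λ', Hom_R(S, S/R), π)` is an
exact context.  Here the left `R`-action on `S/R` is `act r (class x) = class (r·x)`
and the right action of `R` is `ract r (class x) = class (x·r)`;
`Hom_R(S, S/R)` consists of the additive maps `f : S → S/R` with
`f(r·x) = act r (f x)`, and `S'` of the additive endomorphisms `h` of `S/R`
commuting with `act`. -/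
theorem stmt19 {S : Type*} [Ring S] (R : Subring S)
    (act : R → (S ⧸ R.toAddSubgroup) → (S ⧸ R.toAddSubgroup))
    (hact : ∀ (r : R) (x : S),
      act r (QuotientAddGroup.mk x) = QuotientAddGroup.mk ((r : S) * x))
    (ract : R → (S ⧸ R.toAddSubgroup) → (S ⧸ R.toAddSubgroup))
    (hract : ∀ (r : R) (x : S),
      ract r (QuotientAddGroup.mk x) = QuotientAddGroup.mk (x * (r : S))) :
    -- injectivity of `r ↦ (λ(r), λ'(r))`
    Function.Injective (fun r : R => (((r : S), fun q => ract r q) :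
      S × ((S ⧸ R.toAddSubgroup) → (S ⧸ R.toAddSubgroup)))) ∧
    -- exactness in the middle: `(·s)∘π = π∘h` iff `(s, h)` comes from `R`
    (∀ (s : S) (h : (S ⧸ R.toAddSubgroup) →+ (S ⧸ R.toAddSubgroup)),
      (∀ (r : R) (q : S ⧸ R.toAddSubgroup), h (act r q) = act r (h q)) →
      ((∀ x : S, QuotientAddGroup.mk (x * s) = h (QuotientAddGroup.mk x)) ↔
        ∃ r : R, (r : S) = s ∧ ∀ q : S ⧸ R.toAddSubgroup, h q = ract r q)) ∧
    -- exactness on the right: every `R`-linear `f : S → S/R` is `(·s)∘π − π∘h`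
    (∀ f : S →+ S ⧸ R.toAddSubgroup,
      (∀ (r : R) (x : S), f ((r : S) * x) = act r (f x)) →
      ∃ (s : S) (h : (S ⧸ R.toAddSubgroup) →+ (S ⧸ R.toAddSubgroup)),
        (∀ (r : R) (q : S ⧸ R.toAddSubgroup), h (act r q) = act r (h q)) ∧
        ∀ x : S, f x = QuotientAddGroup.mk (x * s) - h (QuotientAddGroup.mk x)) := by
  refine ⟨?_, ?_, ?_⟩
  · intro a b hab
    exact Subtype.ext (congrArg Prod.fst hab)
  · intro s h _hcomm
    constructor
    · intro H
      have h1 : QuotientAddGroup.mk (1 : S) = (0 : S ⧸ R.toAddSubgroup) :=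
        (QuotientAddGroup.eq_zero_iff _).mpr R.one_mem
      have hs : s ∈ R := by
        have hx := H 1
        rw [one_mul, h1, map_zero] at hx
        exact (QuotientAddGroup.eq_zero_iff s).mp hx
      refine ⟨⟨s, hs⟩, rfl, ?_⟩
      intro q
      obtain ⟨x, rfl⟩ := QuotientAddGroup.mk_surjective q
      rw [hract, ← H]
    · rintro ⟨r, rfl, hr⟩ x
      rw [hr, hract]
  · intro f hf
    obtain ⟨s, hs⟩ := QuotientAddGroup.mk_surjective (f 1)
    set φ : S →+ S ⧸ R.toAddSubgroup :=
      (QuotientAddGroup.mk' R.toAddSubgroup).comp (AddMonoidHom.mulRight s) - f with hφ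
    have hφx : ∀ x : S, φ x = QuotientAddGroup.mk (x * s) - f x := fun x => rfl
    have hfr : ∀ r : R, f (r : S) = QuotientAddGroup.mk ((r : S) * s) := by
      intro r
      have := hf r 1
      rw [mul_one] at this
      rw [this, ← hs, hact]
    have hker : ∀ x ∈ R.toAddSubgroup, φ x = 0 := by
      intro x hx
      rw [hφx, hfr ⟨x, hx⟩, sub_self]
    set h : (S ⧸ R.toAddSubgroup) →+ (S ⧸ R.toAddSubgroup) :=
      QuotientAddGroup.lift R.toAddSubgroup φ hker with hhdef
    have hh : ∀ x : S, h (QuotientAddGroup.mk x) = QuotientAddGroup.mk (x * s) - f x :=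
      fun x => rfl
    refine ⟨s, h, ?_, ?_⟩
    · intro r q
      obtain ⟨x, rfl⟩ := QuotientAddGroup.mk_surjective q
      obtain ⟨y, hy⟩ := QuotientAddGroup.mk_surjective (f x)
      rw [hact, hh, hh, hf, ← hy, hact]
      rw [← QuotientAddGroup.mk_sub, ← QuotientAddGroup.mk_sub, hact, mul_sub, mul_assoc]
    · intro x
      rw [hh]
      abel
end
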